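/- arXiv:2008.11063 — 7 statements merged into one kernel-verified Lean document; each statement's English description precedes it below -/
import Mathlib

section
/- Let p be a prime, f a polynomial with coefficients in the ring ℤ_p of p-adic integers, a ∈ ℤ_p, and s ≥ 1 an integer such that ‖f(a)‖ ≤ p^(−s) and ‖f′(a)‖ = 1. Then f′(a) is a unit of ℤ_p, and the Newton iterate a′ := a − f(a)/f′(a) ∈ ℤ_p satisfies ‖f(a′)‖ ≤ p^(−2s) and ‖f′(a′)‖ = 1. -/
theorem stmt_1 (p : ℕ) [Fact p.Prime] (f : Polynomial ℤ_[p]) (a : ℤ_[p]) (s : ℕ) (hs : 1 ≤ s)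
    (hfa : ‖Polynomial.eval a f‖ ≤ (p : ℝ) ^ (-(s : ℤ)))
    (hfa' : ‖Polynomial.eval a (Polynomial.derivative f)‖ = 1) :
    IsUnit (Polynomial.eval a (Polynomial.derivative f)) ∧
    ‖Polynomial.eval
        (a - Polynomial.eval a f * Ring.inverse (Polynomial.eval a (Polynomial.derivative f))) f‖
      ≤ (p : ℝ) ^ (-(2 * s : ℤ)) ∧
    ‖Polynomial.eval
        (a - Polynomial.eval a f * Ring.inverse (Polynomial.eval a (Polynomial.derivative f)))
        (Polynomial.derivative f)‖ = 1 := by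
  have hp1 : (1 : ℝ) < (p : ℝ) := by exact_mod_cast (Fact.out : p.Prime).one_lt
  have hunit : IsUnit (Polynomial.eval a (Polynomial.derivative f)) :=
    PadicInt.isUnit_iff.mpr hfa'
  set u := Polynomial.eval a (Polynomial.derivative f) with hu
  set b := Polynomial.eval a f * Ring.inverse u with hb
  have hinv : ‖Ring.inverse u‖ = 1 := by
    obtain ⟨v, hv⟩ := hunit
    rw [← hv, Ring.inverse_unit]
    exact PadicInt.norm_units v⁻¹
  have hbnorm : ‖b‖ ≤ (p : ℝ) ^ (-(s : ℤ)) := by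
    rw [hb, norm_mul, hinv, mul_one]; exact hfa
  have hblt1 : ‖b‖ < 1 := by
    refine lt_of_le_of_lt hbnorm ?_
    apply zpow_lt_one_of_neg₀ hp1
    simpa using (by omega : 0 < s)
  have hub : u * b = Polynomial.eval a f := by
    rw [hb, mul_comm, mul_assoc, Ring.inverse_mul_cancel _ hunit, mul_one]
  refine ⟨hunit, ?_, ?_⟩
  · obtain ⟨k, hk⟩ := f.binomExpansion a (-b)
    rw [sub_eq_add_neg, hk]
    have : Polynomial.eval a f + u * (-b) + k * (-b) ^ 2 = k * b ^ 2 := by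
      rw [mul_neg, hub]; ring
    rw [this, norm_mul, norm_pow _ _]
    calc ‖k‖ * ‖b‖ ^ 2 ≤ 1 * ((p : ℝ) ^ (-(s : ℤ))) ^ 2 := by
          apply mul_le_mul (PadicInt.norm_le_one k) (pow_le_pow_left₀ (norm_nonneg b) hbnorm 2)
            (by positivity) zero_le_one
      _ = (p : ℝ) ^ (-(2 * s : ℤ)) := by
          rw [one_mul, ← zpow_natCast _ 2, ← zpow_mul]; ring_nf
  · obtain ⟨k, hk⟩ := (Polynomial.derivative f).binomExpansion a (-b)
    rw [sub_eq_add_neg, hk]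
    have hrest : ‖Polynomial.eval a (Polynomial.derivative (Polynomial.derivative f)) * (-b)
        + k * (-b) ^ 2‖ < 1 := by
      apply lt_of_le_of_lt (PadicInt.nonarchimedean _ _)
      apply max_lt
      · rw [norm_mul, norm_neg]
        exact lt_of_le_of_lt (mul_le_of_le_one_left (norm_nonneg b)
          (PadicInt.norm_le_one _)) hblt1
      · rw [neg_sq, norm_mul, norm_pow _ _]
        calc ‖k‖ * ‖b‖ ^ 2 ≤ 1 * ‖b‖ ^ 2 :=
              mul_le_mul_of_nonneg_right (PadicInt.norm_le_one k) (by positivity)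
          _ = ‖b‖ ^ 2 := one_mul _
          _ ≤ ‖b‖ * 1 := by rw [sq]; exact mul_le_mul_of_nonneg_left hblt1.le (norm_nonneg b)
          _ < 1 := by rwa [mul_one]
    have hne : ‖Polynomial.eval a (Polynomial.derivative f)‖
        ≠ ‖Polynomial.eval a (Polynomial.derivative (Polynomial.derivative f)) * (-b)
          + k * (-b) ^ 2‖ := by
      rw [← hu, hfa']; exact (ne_of_lt hrest).symm
    rw [add_assoc, PadicInt.norm_add_eq_max_of_ne hne, ← hu, hfa']
    exact max_eq_left hrest.le
end

section
/- Let p be a prime, f a nonzero polynomial over the field ℚ_p of p-adic numbers, and a ∈ ℚ_p. Let c_i denote the coefficients of the shifted polynomial f(X + a), so that c₀ = f(a) and c₁ = f′(a); assume c₀ ≠ 0 and c₁ ≠ 0, and that for every index i with 2 ≤ i ≤ deg f and c_i ≠ 0 one has v_p(c_i) > v_p(c₀) + i·(v_p(c₁) − v_p(c₀)). Then there exists a unique b ∈ ℚ_p such that f(b) = 0 and v_p(a − b) ≥ v_p(c₀) − v_p(c₁); moreover this b satisfies v_p(a − b) = v_p(c₀) − v_p(c₁). -/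
set_option maxHeartbeats 1600000

section aux
variable {p : ℕ} [hp : Fact p.Prime]

lemma aux_val_eq {x : ℚ_[p]} {t : ℤ} (hx : x ≠ 0) (h : ‖x‖ = (p : ℝ) ^ (-t)) :
    x.valuation = t := by
  have hp0 : (0:ℝ) < p := by exact_mod_cast hp.out.pos
  have hp1 : (p:ℝ) ≠ 1 := by exact_mod_cast hp.out.ne_one
  rw [Padic.norm_eq_zpow_neg_valuation hx, zpow_right_inj₀ hp0 hp1, neg_inj] at h
  exact h

lemma aux_norm_le_norm {x y : ℚ_[p]} (hx : x ≠ 0) (hy : y ≠ 0)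
    (h : x.valuation ≤ y.valuation) : ‖y‖ ≤ ‖x‖ := by
  have hp1 : (1:ℝ) < p := by exact_mod_cast hp.out.one_lt
  rw [Padic.norm_eq_zpow_neg_valuation hx, Padic.norm_eq_zpow_neg_valuation hy]
  exact zpow_le_zpow_right₀ (le_of_lt hp1) (by omega)
end aux

theorem stmt_4 (p : ℕ) [Fact p.Prime] (f : Polynomial ℚ_[p]) (hf : f ≠ 0) (a : ℚ_[p])
    (h0 : (f.comp (Polynomial.X + Polynomial.C a)).coeff 0 ≠ 0)
    (h1 : (f.comp (Polynomial.X + Polynomial.C a)).coeff 1 ≠ 0)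
    (hc0 : (f.comp (Polynomial.X + Polynomial.C a)).coeff 0 = f.eval a)
    (hc1 : (f.comp (Polynomial.X + Polynomial.C a)).coeff 1 =
      (Polynomial.derivative f).eval a)
    (hface : ∀ i : ℕ, 2 ≤ i → i ≤ f.natDegree →
      (f.comp (Polynomial.X + Polynomial.C a)).coeff i ≠ 0 →
      ((f.comp (Polynomial.X + Polynomial.C a)).coeff 0).valuation
        + (i : ℤ) * (((f.comp (Polynomial.X + Polynomial.C a)).coeff 1).valuation
          - ((f.comp (Polynomial.X + Polynomial.C a)).coeff 0).valuation)
        < ((f.comp (Polynomial.X + Polynomial.C a)).coeff i).valuation) :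
    (∃! b : ℚ_[p], f.eval b = 0 ∧
      ((f.comp (Polynomial.X + Polynomial.C a)).coeff 0).valuation
        - ((f.comp (Polynomial.X + Polynomial.C a)).coeff 1).valuation
        ≤ (a - b).valuation) ∧
    ∀ b : ℚ_[p], f.eval b = 0 →
      ((f.comp (Polynomial.X + Polynomial.C a)).coeff 0).valuation
        - ((f.comp (Polynomial.X + Polynomial.C a)).coeff 1).valuation
        ≤ (a - b).valuation →
      (a - b).valuation = ((f.comp (Polynomial.X + Polynomial.C a)).coeff 0).valuation
        - ((f.comp (Polynomial.X + Polynomial.C a)).coeff 1).valuation := by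
  have hp := ‹Fact p.Prime›
  set g : Polynomial ℚ_[p] := f.comp (Polynomial.X + Polynomial.C a) with hgdef
  have hp1 : (1:ℝ) < p := by exact_mod_cast hp.out.one_lt
  have hp0 : (0:ℝ) < p := lt_trans one_pos hp1
  have hdeg : g.natDegree = f.natDegree := by
    rw [hgdef, Polynomial.natDegree_comp, Polynomial.natDegree_X_add_C, mul_one]
  have hn1 : 1 ≤ f.natDegree := hdeg ▸ Polynomial.le_natDegree_of_ne_zero h1
  set v0 : ℤ := (g.coeff 0).valuation with hv0
  set v1 : ℤ := (g.coeff 1).valuation with hv1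
  set t : ℤ := v0 - v1 with ht
  set π : ℚ_[p] := (p : ℚ_[p]) ^ t with hπdef
  have hpq : (p : ℚ_[p]) ≠ 0 := Nat.cast_ne_zero.mpr hp.out.ne_zero
  have hπ : π ≠ 0 := zpow_ne_zero _ hpq
  have hπnorm : ‖π‖ = (p:ℝ) ^ (-t) := Padic.norm_p_zpow t
  set d : ℕ → ℚ_[p] := fun i => g.coeff i * π ^ i / g.coeff 0 with hddef
  have hd0 : d 0 = 1 := by simp [hddef, div_self h0]
  have hdnorm : ∀ i : ℕ, g.coeff i ≠ 0 →
      ‖d i‖ = (p:ℝ) ^ (-((g.coeff i).valuation - (v0 + (i:ℤ) * (v1 - v0)))) := by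
    intro i hci
    rw [hddef]
    simp only [norm_div, norm_mul, norm_pow, hπnorm]
    rw [Padic.norm_eq_zpow_neg_valuation hci, Padic.norm_eq_zpow_neg_valuation h0, ← hv0,
      ← zpow_natCast ((p:ℝ) ^ (-t)), ← zpow_mul, ← zpow_add₀ (ne_of_gt hp0),
      ← zpow_sub₀ (ne_of_gt hp0)]
    congr 1
    rw [ht]
    ring
  have hd1 : ‖d 1‖ = 1 := by
    rw [hdnorm 1 h1, ← hv1]
    norm_num
  have hdle1 : ∀ i, ‖d i‖ ≤ 1 := by
    intro i
    by_cases hci : g.coeff i = 0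
    · simp [hddef, hci]
    rw [hdnorm i hci, ← zpow_zero (p:ℝ)]
    apply zpow_le_zpow_right₀ (le_of_lt hp1)
    match i, hci with
    | 0, hci => simp [hv0]
    | 1, hci => push_cast; linarith
    | (k+2), hci =>
      by_cases hik : k + 2 ≤ f.natDegree
      · have := hface (k+2) (by omega) hik hci
        push_cast at this ⊢
        linarith
      · exact absurd (Polynomial.coeff_eq_zero_of_natDegree_lt (by omega)) hci
  have hdlt : ∀ i, 2 ≤ i → ‖d i‖ ≤ (p:ℝ)⁻¹ := by
    intro i hi2
    by_cases hci : g.coeff i = 0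
    · simp [hddef, hci]
    by_cases hik : i ≤ f.natDegree
    case neg => exact absurd (Polynomial.coeff_eq_zero_of_natDegree_lt (by omega)) hci
    have := hface i hi2 hik hci
    rw [hdnorm i hci, ← zpow_neg_one]
    apply zpow_le_zpow_right₀ (le_of_lt hp1)
    have h2 : v0 + (i:ℤ) * (v1 - v0) + 1 ≤ (g.coeff i).valuation := by exact this
    linarith
  -- lift to ℤ_p
  have hpinv_pos : (0:ℝ) < (p:ℝ)⁻¹ := by positivity
  have hpinv1 : (p:ℝ)⁻¹ < 1 := by
    rw [inv_lt_one_iff₀]; right; exact hp1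
  set D : ℕ → ℤ_[p] := fun i => ⟨d i, hdle1 i⟩ with hDdef
  have hDcoe : ∀ i, ((D i : ℤ_[p]) : ℚ_[p]) = d i := fun i => rfl
  have hDnorm : ∀ i, ‖D i‖ = ‖d i‖ := fun i => rfl
  have hD0 : D 0 = 1 := Subtype.ext (by rw [hDcoe 0, hd0]; rfl)
  have hD1 : ‖D 1‖ = 1 := by rw [hDnorm]; exact hd1
  set H : Polynomial ℤ_[p] :=
    ∑ i ∈ Finset.range (f.natDegree + 1), Polynomial.C (D i) * Polynomial.X ^ i with hHdef
  have hHeval : ∀ y : ℤ_[p], H.eval y =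
      ∑ i ∈ Finset.range (f.natDegree + 1), D i * y ^ i := by
    intro y
    rw [hHdef, Polynomial.eval_finset_sum]
    simp
  have hfg : ∀ x : ℚ_[p], g.eval x = f.eval (x + a) := by
    intro x
    rw [hgdef, Polynomial.eval_comp]
    simp
  have hGH : ∀ y : ℤ_[p], g.eval (π * (y : ℚ_[p])) =
      g.coeff 0 * ((H.eval y : ℤ_[p]) : ℚ_[p]) := by
    intro y
    rw [hHeval]
    rw [show (((∑ i ∈ Finset.range (f.natDegree + 1), D i * y ^ i : ℤ_[p])) : ℚ_[p])
      = ∑ i ∈ Finset.range (f.natDegree + 1), (d i) * ((y:ℚ_[p])) ^ i by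
      rw [show (((∑ i ∈ Finset.range (f.natDegree + 1), D i * y ^ i : ℤ_[p])) : ℚ_[p])
        = PadicInt.Coe.ringHom (∑ i ∈ Finset.range (f.natDegree + 1), D i * y ^ i) from rfl,
        map_sum]
      apply Finset.sum_congr rfl
      intro i _
      rfl]
    rw [Polynomial.eval_eq_sum_range, hdeg, Finset.mul_sum]
    apply Finset.sum_congr rfl
    intro i _
    rw [hddef]
    field_simp
    ring
  have hsplit : ∀ y : ℤ_[p], H.eval y =
      D 0 + D 1 * y + ∑ i ∈ Finset.Ico 2 (f.natDegree + 1), D i * y ^ i := by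
    intro y
    rw [hHeval, Finset.range_eq_Ico,
      Finset.sum_eq_sum_Ico_succ_bot (by omega : 0 < f.natDegree + 1),
      Finset.sum_eq_sum_Ico_succ_bot (by omega : 1 < f.natDegree + 1)]
    ring
  have htail : ∀ y : ℤ_[p], ‖∑ i ∈ Finset.Ico 2 (f.natDegree + 1), D i * y ^ i‖ ≤ (p:ℝ)⁻¹ := by
    intro y
    apply IsUltrametricDist.norm_sum_le_of_forall_le_of_nonneg (le_of_lt hpinv_pos)
    intro i hi
    calc ‖D i * y ^ i‖ ≤ ‖D i‖ * ‖y ^ i‖ := norm_mul_le _ _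
      _ ≤ (p:ℝ)⁻¹ * 1 := by
          apply mul_le_mul _ (PadicInt.norm_le_one _) (norm_nonneg _) (le_of_lt hpinv_pos)
          rw [hDnorm]
          exact hdlt i (Finset.mem_Ico.mp hi).1
      _ = (p:ℝ)⁻¹ := mul_one _
  set y₀ : ℤ_[p] := -(D 1).inv with hy₀def
  have hinv1 : ‖(D 1).inv‖ = 1 := by
    have h := congrArg (fun x : ℤ_[p] => ‖x‖) (PadicInt.mul_inv hD1)
    simpa [norm_mul, hD1] using h
  have hy₀norm : ‖y₀‖ = 1 := by rw [hy₀def, norm_neg]; exact hinv1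
  have hcancel : D 0 + D 1 * y₀ = 0 := by
    rw [hD0, hy₀def, mul_neg, PadicInt.mul_inv hD1]
    ring
  have hHy₀ : ‖H.eval y₀‖ ≤ (p:ℝ)⁻¹ := by
    rw [hsplit, hcancel, zero_add]
    exact htail y₀
  have hHdeval : ∀ y : ℤ_[p], H.derivative.eval y =
      ∑ i ∈ Finset.range (f.natDegree + 1), D i * i * y ^ (i - 1) := by
    intro y
    rw [hHdef, Polynomial.derivative_sum]
    rw [Polynomial.eval_finset_sum]
    apply Finset.sum_congr rfl
    intro i _
    rw [Polynomial.derivative_C_mul_X_pow]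
    simp
  have hdersplit : H.derivative.eval y₀ =
      D 1 + ∑ i ∈ Finset.Ico 2 (f.natDegree + 1), D i * i * y₀ ^ (i - 1) := by
    rw [hHdeval, Finset.range_eq_Ico,
      Finset.sum_eq_sum_Ico_succ_bot (by omega : 0 < f.natDegree + 1),
      Finset.sum_eq_sum_Ico_succ_bot (by omega : 1 < f.natDegree + 1)]
    simp
  have hdertail : ‖∑ i ∈ Finset.Ico 2 (f.natDegree + 1), D i * i * y₀ ^ (i - 1)‖ ≤ (p:ℝ)⁻¹ := by
    apply IsUltrametricDist.norm_sum_le_of_forall_le_of_nonneg (le_of_lt hpinv_pos)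
    intro i hi
    calc ‖D i * i * y₀ ^ (i - 1)‖ ≤ ‖D i * i‖ * ‖y₀ ^ (i-1)‖ := norm_mul_le _ _
      _ ≤ ‖D i * i‖ * 1 := by
          apply mul_le_mul_of_nonneg_left (PadicInt.norm_le_one _) (norm_nonneg _)
      _ = ‖D i * i‖ := mul_one _
      _ ≤ ‖D i‖ * ‖(i : ℤ_[p])‖ := norm_mul_le _ _
      _ ≤ (p:ℝ)⁻¹ * 1 := by
          apply mul_le_mul _ (PadicInt.norm_le_one _) (norm_nonneg _) (le_of_lt hpinv_pos)
          rw [hDnorm]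
          exact hdlt i (Finset.mem_Ico.mp hi).1
      _ = (p:ℝ)⁻¹ := mul_one _
  have hdernorm : ‖H.derivative.eval y₀‖ = 1 := by
    rw [hdersplit, PadicInt.norm_add_eq_max_of_ne
      (by rw [hD1]; exact fun h => absurd (h ▸ hdertail) (not_le.mpr hpinv1)), hD1]
    exact max_eq_left (le_trans hdertail (le_of_lt hpinv1))
  obtain ⟨z, hzroot, hzdist, hzder, hzuniq⟩ := hensels_lemma
    (F := H) (a := y₀) (by simp only [Polynomial.coe_aeval_eq_eval]; rw [hdernorm, one_pow]; exact lt_of_le_of_lt hHy₀ hpinv1)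
  simp only [Polynomial.coe_aeval_eq_eval] at hzroot hzdist hzuniq
  rw [hdernorm] at hzdist hzuniq
  have hznorm : ‖z‖ = 1 := by
    have : z = (z - y₀) + y₀ := by ring
    rw [this, PadicInt.norm_add_eq_max_of_ne (by rw [hy₀norm]; exact ne_of_lt hzdist), hy₀norm]
    exact max_eq_right (le_of_lt hzdist)
  set b : ℚ_[p] := a + π * (z : ℚ_[p]) with hbdef
  have hbroot : f.eval b = 0 := by
    have h := hGH z
    rw [hfg] at h
    have : π * (z:ℚ_[p]) + a = b := by rw [hbdef]; ring
    rw [this, hzroot] at h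
    simpa using h
  have habne : a - b ≠ 0 := by
    rw [hbdef]
    intro h
    have : π * (z:ℚ_[p]) = 0 := by linear_combination -h
    rcases mul_eq_zero.mp this with h' | h'
    · exact hπ h'
    · have hz0 : z = 0 := (PadicInt.coe_eq_zero (x := z)).mp h'
      rw [hz0, norm_zero] at hznorm
      exact one_ne_zero hznorm.symm
  have habnorm : ‖a - b‖ = (p:ℝ) ^ (-t) := by
    rw [hbdef, show a - (a + π * (z:ℚ_[p])) = -(π * (z:ℚ_[p])) by ring, norm_neg, norm_mul,
      hπnorm, show ‖(z:ℚ_[p])‖ = ‖z‖ from rfl, hznorm, mul_one]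
  have habval : (a - b).valuation = t := aux_val_eq habne habnorm
  have huniq : ∀ b' : ℚ_[p], f.eval b' = 0 → t ≤ (a - b').valuation → b' = b := by
    intro b' hroot hval
    have hb'ne : a - b' ≠ 0 := by
      intro h
      have hba : b' = a := (sub_eq_zero.mp h).symm
      rw [hba] at hroot
      exact h0 (hc0.trans hroot)
    have hxnorm : ‖b' - a‖ ≤ (p:ℝ) ^ (-t) := by
      rw [norm_sub_rev, ← hπnorm]
      rw [hπnorm]
      calc ‖a - b'‖ = (p:ℝ) ^ (-(a - b').valuation) := Padic.norm_eq_zpow_neg_valuation hb'ne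
        _ ≤ (p:ℝ) ^ (-t) := zpow_le_zpow_right₀ (le_of_lt hp1) (by omega)
    have hynorm : ‖(b' - a) / π‖ ≤ 1 := by
      rw [norm_div, hπnorm, div_le_one (by positivity)]
      exact hxnorm
    set Y : ℤ_[p] := ⟨(b' - a) / π, hynorm⟩ with hYdef
    have hxy : π * (Y : ℚ_[p]) = b' - a := by
      show π * ((b' - a) / π) = b' - a
      field_simp
    have hHY : H.eval Y = 0 := by
      have h := hGH Y
      rw [hxy, hfg, sub_add_cancel, hroot] at h
      have h2 : ((H.eval Y : ℤ_[p]) : ℚ_[p]) = 0 := by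
        rcases mul_eq_zero.mp h.symm with h' | h'
        · exact absurd h' h0
        · exact h'
      exact PadicInt.coe_eq_zero.mp h2
    have hsum2 : ‖D 1 * Y + D 0‖ ≤ (p:ℝ)⁻¹ := by
      have h := hsplit Y
      rw [hHY] at h
      have : D 1 * Y + D 0 = -(∑ i ∈ Finset.Ico 2 (f.natDegree + 1), D i * Y ^ i) := by
        linear_combination -h
      rw [this, norm_neg]
      exact htail Y
    have hball : ‖Y - y₀‖ < 1 := by
      have hfact : Y - y₀ = (D 1).inv * (D 1 * Y + D 0) := by
        rw [hD0, hy₀def, mul_add, mul_one, ← mul_assoc, PadicInt.inv_mul hD1, one_mul]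
        ring
      rw [hfact]
      calc ‖(D 1).inv * (D 1 * Y + D 0)‖ = ‖(D 1).inv‖ * ‖D 1 * Y + D 0‖ := norm_mul _ _
        _ ≤ 1 * (p:ℝ)⁻¹ := by rw [hinv1]; exact mul_le_mul_of_nonneg_left hsum2 zero_le_one
        _ < 1 := by rw [one_mul]; exact hpinv1
    have hYz : Y = z := hzuniq Y hHY hball
    have : b' - a = π * (z : ℚ_[p]) := by rw [← hxy, hYz]
    rw [hbdef]
    linear_combination this
  constructor
  · refine ⟨b, ⟨hbroot, le_of_eq habval.symm⟩, fun b' hb' => huniq b' hb'.1 hb'.2⟩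
  · intro b' h1' h2'
    rw [huniq b' h1' h2']
    exact habval
end

section
/- Let α > 0 be a real number and define r(α, b) := b^(α+1) / (b^α − 1) for real b > 1, and r*(α) := (1+α)^(1 + 1/α) / α. Then for every b > 1 one has r(α, b) ≥ r*(α), and equality holds at b = (1+α)^(1/α); in particular (1+α)^(1/α) > 1 and r(α, (1+α)^(1/α)) = r*(α), so b ↦ r(α, b) attains its global minimum on (1, ∞) at b = (1+α)^(1/α). -/
open Real

-- key: for t > 1, p = 1 + 1/α, (1+α)^p * (t-1) ≤ α * t^p
lemma key_ineq (α t : ℝ) (hα : 0 < α) (ht : 1 < t) :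
    (1 + α) ^ (1 + 1 / α) * (t - 1) ≤ α * t ^ (1 + 1 / α) := by
  have hA : (0:ℝ) < 1 + α := by linarith
  set p : ℝ := 1 + 1 / α with hp
  have hp1 : 1 ≤ p := by
    have : 0 < 1 / α := by positivity
    simp [hp]; linarith
  set s : ℝ := t / (1 + α) - 1 with hs
  have hs1 : -1 ≤ s := by
    have : 0 < t / (1 + α) := by positivity
    simp [hs]; linarith
  have hB := one_add_mul_self_le_rpow_one_add hs1 hp1
  have h1s : 1 + s = t / (1 + α) := by ring
  rw [h1s, Real.div_rpow (by linarith) hA.le] at hB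
  have hApos : 0 < (1 + α) ^ p := Real.rpow_pos_of_pos hA p
  have hB2 : (1 + α) ^ p * (1 + p * s) ≤ t ^ p := by
    rw [mul_comm]
    exact (le_div_iff₀ hApos).mp hB
  -- (1+α)^p = (1+α) * (1+α)^(1/α)
  have hsplit : (1 + α) ^ p = (1 + α) * (1 + α) ^ (1 / α) := by
    rw [hp, Real.rpow_add hA, Real.rpow_one]
  have hcpos : 0 < (1 + α) ^ (1 / α) := Real.rpow_pos_of_pos hA _
  have hLHS : (1 + α) ^ p * (1 + p * s) = (1 + α) ^ p * (t - 1) / α := by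
    rw [hsplit]
    field_simp [hs, hp]
    rw [hp, hs]
    field_simp
    ring
  rw [hLHS] at hB2
  rw [div_le_iff₀ hα] at hB2
  linarith [hB2]

theorem stmt_8 (α : ℝ) (hα : 0 < α) :
    (∀ b : ℝ, 1 < b → (1 + α) ^ (1 + 1 / α) / α ≤ b ^ (α + 1) / (b ^ α - 1)) ∧
    1 < (1 + α) ^ (1 / α) ∧
    ((1 + α) ^ (1 / α)) ^ (α + 1) / (((1 + α) ^ (1 / α)) ^ α - 1)
      = (1 + α) ^ (1 + 1 / α) / α := by
  have hA : (0:ℝ) < 1 + α := by linarith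
  refine ⟨?_, ?_, ?_⟩
  · intro b hb
    have hb0 : (0:ℝ) < b := lt_trans one_pos hb
    have ht : 1 < b ^ α := Real.one_lt_rpow_iff_of_pos hb0 |>.mpr (Or.inl ⟨hb, hα⟩)
    have hbexp : b ^ (α + 1) = (b ^ α) ^ (1 + 1 / α) := by
      rw [← Real.rpow_mul hb0.le]
      congr 1
      field_simp
    rw [hbexp, div_le_div_iff₀ hα (by linarith)]
    have := key_ineq α (b ^ α) hα ht
    linarith
  · exact Real.one_lt_rpow_iff_of_pos hA |>.mpr (Or.inl ⟨by linarith, by positivity⟩)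
  · have h1 : ((1 + α) ^ (1 / α)) ^ (α + 1) = (1 + α) ^ (1 + 1 / α) := by
      rw [← Real.rpow_mul hA.le]
      congr 1
      field_simp
    have h2 : ((1 + α) ^ (1 / α)) ^ α = 1 + α := by
      rw [← Real.rpow_mul hA.le, one_div, inv_mul_cancel₀ hα.ne', Real.rpow_one]
    rw [h1, h2]
    ring_nf
end

section
/- For every real number α ≥ 1 one has α·2^α ≤ (2^α − 1)·(1 + α) ≤ (2^α − 1)·(1+α)^(1 + 1/α), and consequently 2^(α+1) / (2^α − 1) ≤ 2·(1+α)^(1 + 1/α) / α. -/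
theorem stmt_13 (α : ℝ) (hα : 1 ≤ α) :
    (α * (2 : ℝ) ^ α ≤ ((2 : ℝ) ^ α - 1) * (1 + α) ∧
      ((2 : ℝ) ^ α - 1) * (1 + α) ≤ ((2 : ℝ) ^ α - 1) * (1 + α) ^ (1 + 1 / α)) ∧
    (2 : ℝ) ^ (α + 1) / ((2 : ℝ) ^ α - 1) ≤ 2 * (1 + α) ^ (1 + 1 / α) / α := by
  have hα0 : 0 < α := lt_of_lt_of_le one_pos hα
  have hbern : 1 + α ≤ (2 : ℝ) ^ α := by
    have := one_add_mul_self_le_rpow_one_add (by norm_num : (-1 : ℝ) ≤ 1) hα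
    norm_num at this; linarith
  have h2 : (2 : ℝ) ≤ (2 : ℝ) ^ α := by
    calc (2 : ℝ) = 2 ^ (1 : ℝ) := (Real.rpow_one 2).symm
    _ ≤ 2 ^ α := Real.rpow_le_rpow_of_exponent_le (by norm_num) hα
  have hpos : (0 : ℝ) < (2 : ℝ) ^ α - 1 := by linarith
  have h1 : α * (2 : ℝ) ^ α ≤ ((2 : ℝ) ^ α - 1) * (1 + α) := by nlinarith
  have hrpow : (1 + α) ≤ (1 + α) ^ (1 + 1 / α) := by
    calc (1 + α) = (1 + α) ^ (1 : ℝ) := (Real.rpow_one _).symm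
    _ ≤ (1 + α) ^ (1 + 1 / α) := Real.rpow_le_rpow_of_exponent_le (by linarith)
        (by have : 0 < 1/α := by positivity
            linarith)
  have h2' : ((2 : ℝ) ^ α - 1) * (1 + α) ≤ ((2 : ℝ) ^ α - 1) * (1 + α) ^ (1 + 1 / α) :=
    mul_le_mul_of_nonneg_left hrpow hpos.le
  refine ⟨⟨h1, h2'⟩, ?_⟩
  rw [div_le_div_iff₀ hpos hα0, Real.rpow_add (by norm_num), Real.rpow_one]
  nlinarith [h1.trans h2']
end

section
/- Let I be a finite nonempty index set and x, v, w : I → ℝ functions with w(i) ≤ v(i) for every i ∈ I, and let J := {i ∈ I : w(i) = v(i)}. For t ∈ ℝ, define L(t) := inf{y : (t, y) ∈ convex hull of {(x(i), w(i)) : i ∈ I}}, Δ(t) := inf{y : (t, y) ∈ convex hull of {(x(i), v(i)) : i ∈ I}}, and U(t) := inf{y : (t, y) ∈ convex hull of {(x(i), v(i)) : i ∈ J}}. Suppose t ∈ ℝ is such that there exists y with (t, y) in the convex hull of {(x(i), v(i)) : i ∈ J}, and that L(t) = U(t). Then L(t) = Δ(t) = U(t). -/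
open Pointwise

theorem stmt_16 (I : Type*) [Fintype I] [Nonempty I] (x v w : I → ℝ)
    (hwv : ∀ i, w i ≤ v i) (t : ℝ)
    (hJ : ∃ y : ℝ, (t, y) ∈
      convexHull ℝ (Set.range fun i : {i : I // w i = v i} => (x i.1, v i.1)))
    (hLU : sInf {y : ℝ | (t, y) ∈ convexHull ℝ (Set.range fun i => (x i, w i))}
        = sInf {y : ℝ | (t, y) ∈
            convexHull ℝ (Set.range fun i : {i : I // w i = v i} => (x i.1, v i.1))}) :
    sInf {y : ℝ | (t, y) ∈ convexHull ℝ (Set.range fun i => (x i, w i))}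
        = sInf {y : ℝ | (t, y) ∈ convexHull ℝ (Set.range fun i => (x i, v i))} ∧
    sInf {y : ℝ | (t, y) ∈ convexHull ℝ (Set.range fun i => (x i, v i))}
        = sInf {y : ℝ | (t, y) ∈
            convexHull ℝ (Set.range fun i : {i : I // w i = v i} => (x i.1, v i.1))} := by
  set Lset := {y : ℝ | (t, y) ∈ convexHull ℝ (Set.range fun i => (x i, w i))} with hLdef
  set Dset := {y : ℝ | (t, y) ∈ convexHull ℝ (Set.range fun i => (x i, v i))} with hDdef
  set Uset := {y : ℝ | (t, y) ∈
      convexHull ℝ (Set.range fun i : {i : I // w i = v i} => (x i.1, v i.1))} with hUdef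
  -- boundedness of sections
  have hbdd : ∀ f : I → ℝ,
      BddBelow {y : ℝ | (t, y) ∈ convexHull ℝ (Set.range fun i => (x i, f i))} := by
    intro f
    set c := Finset.univ.inf' Finset.univ_nonempty f with hc
    refine ⟨c, fun y hy => ?_⟩
    have hsub : convexHull ℝ (Set.range fun i => (x i, f i)) ⊆
        {p : ℝ × ℝ | c ≤ p.2} := by
      apply convexHull_min
      · rintro p ⟨i, rfl⟩
        show c ≤ f i
        exact Finset.inf'_le _ (Finset.mem_univ i)
      · exact convex_halfSpace_ge (LinearMap.snd ℝ ℝ ℝ).isLinear c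
    exact hsub hy
  have hbL : BddBelow Lset := hbdd w
  have hbD : BddBelow Dset := hbdd v
  -- U ⊆ D
  have hUD : Uset ⊆ Dset := by
    intro y hy
    refine convexHull_mono ?_ hy
    rintro p ⟨i, rfl⟩
    exact ⟨i.1, rfl⟩
  have hUne : Uset.Nonempty := hJ
  have hDne : Dset.Nonempty := hUne.mono hUD
  -- Δ ≤ U
  have hDleU : sInf Dset ≤ sInf Uset := csInf_le_csInf hbD hUne hUD
  -- for each y ∈ Dset, there is z ≤ y in Lset
  have hkey : ∀ y ∈ Dset, ∃ z ∈ Lset, z ≤ y := by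
    intro y hy
    have hsub : convexHull ℝ (Set.range fun i => (x i, v i)) ⊆
        convexHull ℝ (Set.range fun i => (x i, w i)) +
          ({(0 : ℝ)} ×ˢ Set.Ici (0 : ℝ)) := by
      apply convexHull_min
      · rintro p ⟨i, rfl⟩
        have heq : (x i, v i) = (x i, w i) + ((0 : ℝ), v i - w i) := by
          simp [Prod.ext_iff]
        show (x i, v i) ∈ _
        rw [heq]
        exact Set.add_mem_add (subset_convexHull ℝ _ ⟨i, rfl⟩)
          (Set.mem_prod.2 ⟨rfl, sub_nonneg.2 (hwv i)⟩)
      · exact (convex_convexHull ℝ _).add ((convex_singleton 0).prod (convex_Ici 0))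
    obtain ⟨p, hp, q, hq, hpq⟩ := Set.mem_add.1 (hsub hy)
    have hq1 : q.1 = 0 := hq.1
    have hq2 : (0 : ℝ) ≤ q.2 := hq.2
    have hp1 : p.1 = t := by
      have h1 : p.1 + q.1 = t := congrArg Prod.fst hpq
      rw [hq1] at h1; simpa using h1
    have hp2 : p.2 + q.2 = y := congrArg Prod.snd hpq
    refine ⟨p.2, ?_, ?_⟩
    · show (t, p.2) ∈ (convexHull ℝ) (Set.range fun i => (x i, w i))
      rwa [← hp1, Prod.mk.eta]
    · linarith
  have hLleD : sInf Lset ≤ sInf Dset := by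
    refine le_csInf hDne fun y hy => ?_
    obtain ⟨z, hz, hzy⟩ := hkey y hy
    exact (csInf_le hbL hz).trans hzy
  constructor
  · exact le_antisymm hLleD (hLU ▸ hDleU)
  · exact le_antisymm hDleU (hLU ▸ hLleD)
end

section
/- Let K be a field that is complete with respect to a nonarchimedean (ultrametric) multiplicative absolute value ‖·‖, let K̄ be an algebraic closure of K equipped with the unique extension of ‖·‖, let a ∈ K̄ be separable over K, and let b ∈ K̄. Suppose that ‖b − a‖ < ‖a′ − a‖ for every K-conjugate a′ of a with a′ ≠ a (i.e. every other root a′ of the minimal polynomial of a over K). Then a lies in the field K(b), i.e. K(a) ⊆ K(b). -/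
open Polynomial IntermediateField

private lemma kras_pow_le {a b C : ℝ} (hb : 0 ≤ b) (hC : 0 < C)
    (h : ∀ n : ℕ, a ^ (n + 1) ≤ C * b ^ (n + 1)) : a ≤ b := by
  by_contra hab
  push_neg at hab
  rcases eq_or_lt_of_le hb with hb0 | hb0
  · have h0 := h 0
    simp only [zero_add, pow_one, ← hb0, mul_zero] at h0
    nlinarith
  · have hr : 1 < a / b := (one_lt_div hb0).2 hab
    obtain ⟨n, hn⟩ := pow_unbounded_of_one_lt C hr
    have hle : (a / b) ^ (n + 1) ≤ C := by
      rw [div_pow, div_le_iff₀ (by positivity)]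
      exact h n
    have hmono : (a / b) ^ n ≤ (a / b) ^ (n + 1) :=
      pow_le_pow_right₀ (le_of_lt hr) (by omega)
    linarith

private lemma kras_one_sided {K L : Type*} [NontriviallyNormedField K] [CompleteSpace K]
    [NormedField L] [Algebra K L] (hext : ∀ y : K, ‖algebraMap K L y‖ = ‖y‖)
    (V : Submodule K L) [FiniteDimensional K ↥V] (T : ↥V →ₗ[K] L)
    (z w : L) (hz : ∀ n : ℕ, z ^ (n + 1) ∈ V)
    (hw : ∀ n : ℕ, T ⟨z ^ (n + 1), hz n⟩ = w ^ (n + 1)) : ‖w‖ ≤ ‖z‖ := by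
  letI : NormedSpace K L := ⟨fun c x => by rw [Algebra.smul_def, norm_mul, hext]⟩
  let f := LinearMap.toContinuousLinearMap T
  have hC : (0:ℝ) < ‖f‖ + 1 := by positivity
  refine kras_pow_le (norm_nonneg z) hC fun n => ?_
  calc ‖w‖ ^ (n + 1) = ‖w ^ (n + 1)‖ := (norm_pow _ _).symm
    _ = ‖f ⟨z ^ (n + 1), hz n⟩‖ := by rw [show f ⟨z ^ (n+1), hz n⟩ = T ⟨z ^ (n+1), hz n⟩ from rfl, hw n]
    _ ≤ ‖f‖ * ‖(⟨z ^ (n + 1), hz n⟩ : ↥V)‖ := f.le_opNorm _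
    _ ≤ (‖f‖ + 1) * ‖z‖ ^ (n + 1) := by
        have : ‖(⟨z ^ (n + 1), hz n⟩ : ↥V)‖ = ‖z‖ ^ (n + 1) := by
          rw [show ‖(⟨z ^ (n + 1), hz n⟩ : ↥V)‖ = ‖z ^ (n+1)‖ from rfl, norm_pow]
        rw [this]
        have h1 : (0:ℝ) ≤ ‖z‖ ^ (n+1) := by positivity
        nlinarith [norm_nonneg f]

private lemma kras_norm_le_one {K L : Type*} [NormedField K] [NormedField L]
    [IsUltrametricDist L] [Algebra K L] [Algebra.IsAlgebraic K L]
    (hext : ∀ y : K, ‖algebraMap K L y‖ = ‖y‖) (htriv : ∀ c : K, ‖c‖ ≤ 1) (z : L) :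
    ‖z‖ ≤ 1 := by
  by_contra h1
  push_neg at h1
  obtain ⟨p, pmonic, hp⟩ := (Algebra.IsAlgebraic.isAlgebraic (R := K) z).isIntegral
  rw [← Polynomial.aeval_def] at hp
  set n := p.natDegree with hn
  have hn0 : n ≠ 0 := by
    intro h0
    rw [Polynomial.Monic.natDegree_eq_zero pmonic] at h0
    rw [h0] at hp
    simp at hp
  have key : z ^ n = -∑ i ∈ Finset.range n, p.coeff i • z ^ i := by
    have h2 := Polynomial.aeval_eq_sum_range (R := K) (S := L) (p := p) z
    rw [hp, Finset.sum_range_succ, pmonic.coeff_natDegree, one_smul] at h2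
    linear_combination -h2
  have hb : ∀ i ∈ Finset.range n, ‖p.coeff i • z ^ i‖ ≤ ‖z‖ ^ (n - 1) := by
    intro i hi
    rw [Algebra.smul_def, norm_mul, hext, norm_pow]
    calc ‖p.coeff i‖ * ‖z‖ ^ i ≤ 1 * ‖z‖ ^ i := by
          have := htriv (p.coeff i)
          have : (0:ℝ) ≤ ‖z‖ ^ i := by positivity
          nlinarith [htriv (p.coeff i)]
      _ = ‖z‖ ^ i := one_mul _
      _ ≤ ‖z‖ ^ (n - 1) := by
          refine pow_le_pow_right₀ (le_of_lt h1) ?_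
          have := Finset.mem_range.mp hi
          omega
  have hsum : ‖z ^ n‖ ≤ ‖z‖ ^ (n - 1) := by
    rw [key, norm_neg]
    exact IsUltrametricDist.norm_sum_le_of_forall_le_of_nonneg (by positivity) hb
  rw [norm_pow] at hsum
  have : ‖z‖ ^ (n - 1) < ‖z‖ ^ n := pow_lt_pow_right₀ h1 (by omega)
  linarith

set_option synthInstance.maxHeartbeats 1000000 in
set_option maxHeartbeats 2000000 in
/-- Krasner's lemma. -/
theorem stmt_17 (K : Type*) [NormedField K] [CompleteSpace K] [IsUltrametricDist K]
    (L : Type*) [NormedField L] [IsUltrametricDist L] [Algebra K L] [IsAlgClosure K L]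
    (hext : ∀ y : K, ‖algebraMap K L y‖ = ‖y‖)
    (a b : L) (hsep : IsSeparable K a)
    (hkras : ∀ a' ∈ (minpoly K a).aroots L, a' ≠ a → ‖b - a‖ < ‖a' - a‖) :
    a ∈ IntermediateField.adjoin K {b} := by
  haveI halg : Algebra.IsAlgebraic K L := IsAlgClosure.isAlgebraic
  haveI : IsAlgClosed L := IsAlgClosure.isAlgClosed K
  classical
  by_cases hba : a = b
  · rw [hba]
    exact IntermediateField.subset_adjoin K {b} rfl
  by_contra hnotmem
  set M := IntermediateField.adjoin K {b} with hM
  have hbi : IsIntegral K b := (Algebra.IsAlgebraic.isAlgebraic (R := K) b).isIntegral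
  have hai : IsIntegral K a := (Algebra.IsAlgebraic.isAlgebraic (R := K) a).isIntegral
  haveI : FiniteDimensional K ↥M := IntermediateField.adjoin.finiteDimensional hbi
  have haM : IsIntegral ↥M a := hai.tower_top
  set p := minpoly (↥M) a with hpdef
  have hp0 : p ≠ 0 := minpoly.ne_zero haM
  have hpdvd : p ∣ (minpoly K a).map (algebraMap K ↥M) :=
    minpoly.dvd_map_of_isScalarTower K (↥M) a
  have hpsep : p.Separable := (Polynomial.Separable.map hsep).of_dvd hpdvd
  have hd : 2 ≤ p.natDegree := by
    rw [minpoly.two_le_natDegree_iff haM]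
    rintro ⟨m, rfl⟩
    exact hnotmem m.2
  -- roots of p in L
  have haroot : a ∈ p.aroots L := by
    rw [Polynomial.mem_aroots]
    exact ⟨hp0, minpoly.aeval _ _⟩
  have hnodup : (p.aroots L).Nodup :=
    (Polynomial.nodup_roots (hpsep.map (f := algebraMap (↥M) L)))
  have hcard : (p.aroots L).card = p.natDegree := by
    rw [Polynomial.aroots_def]
    rw [← (IsAlgClosed.splits (p.map (algebraMap (↥M) L))).natDegree_eq_card_roots, Polynomial.natDegree_map]
  obtain ⟨a'', ha''⟩ : ∃ a'', a'' ∈ (p.aroots L).erase a := by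
    apply Multiset.exists_mem_of_ne_zero
    intro h0
    have := Multiset.card_erase_of_mem haroot
    rw [h0] at this
    simp [hcard] at this
    omega
  have ha''root : a'' ∈ p.aroots L := Multiset.mem_of_mem_erase ha''
  have hne : a'' ≠ a := (hnodup.mem_erase_iff.mp ha'').1
  have ha''K : a'' ∈ (minpoly K a).aroots L := by
    rw [Polynomial.mem_aroots]
    refine ⟨minpoly.ne_zero hai, ?_⟩
    have h1 : (Polynomial.aeval a'') p = 0 := by
      rw [Polynomial.mem_aroots] at ha''root
      exact ha''root.2
    obtain ⟨q, hq⟩ := hpdvd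
    have : Polynomial.aeval a'' ((minpoly K a).map (algebraMap K ↥M)) = 0 := by
      rw [hq, map_mul, h1, zero_mul]
    rwa [Polynomial.aeval_map_algebraMap] at this
  have hlt := hkras a'' ha''K hne
  by_cases htriv : ∀ c : K, ‖c‖ ≤ 1
  · have h1 : ∀ w : L, w ≠ 0 → ‖w‖ = 1 := by
      intro w hw
      have hle := kras_norm_le_one hext htriv w
      have hle' := kras_norm_le_one hext htriv w⁻¹
      rw [norm_inv] at hle'
      have hwpos : 0 < ‖w‖ := norm_pos_iff.mpr hw
      have hmul : ‖w‖⁻¹ * ‖w‖ = 1 := inv_mul_cancel₀ (ne_of_gt hwpos)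
      nlinarith
    have e1 : ‖b - a‖ = 1 := h1 _ (sub_ne_zero.mpr fun h => hba h.symm)
    have e2 : ‖a'' - a‖ = 1 := h1 _ (sub_ne_zero.mpr hne)
    rw [e1, e2] at hlt
    exact lt_irrefl 1 hlt
  · push_neg at htriv
    obtain ⟨c, hc⟩ := htriv
    letI : NontriviallyNormedField K := { ‹NormedField K› with non_trivial := ⟨c, hc⟩ }
    set N := IntermediateField.adjoin (↥M) {a} with hN
    haveI : FiniteDimensional (↥M) ↥N := IntermediateField.adjoin.finiteDimensional haM
    haveI hfdN : FiniteDimensional K ↥N := FiniteDimensional.trans K (↥M) ↥N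
    let τ : ↥N →ₐ[↥M] L :=
      (IntermediateField.algHomAdjoinIntegralEquiv (↥M) haM).symm ⟨a'', ha''root⟩
    have hτgen : τ (IntermediateField.AdjoinSimple.gen (↥M) a) = a'' :=
      IntermediateField.algHomAdjoinIntegralEquiv_symm_apply_gen (↥M) haM ⟨a'', ha''root⟩
    let V : Submodule K L :=
      Subalgebra.toSubmodule (IntermediateField.restrictScalars K N).toSubalgebra
    have hVN : ∀ x : L, x ∈ V → x ∈ N := fun x hx => hx
    have hNV : ∀ x : L, x ∈ N → x ∈ V := fun x hx => hx
    haveI : FiniteDimensional K ↥V := hfdN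
    let T : ↥V →ₗ[K] L :=
      { toFun := fun v => τ ⟨v.1, hVN v.1 v.2⟩
        map_add' := by
          intro x y
          show τ ⟨(x + y).1, _⟩ = τ ⟨x.1, _⟩ + τ ⟨y.1, _⟩
          rw [← map_add]
          exact congrArg τ (Subtype.ext rfl)
        map_smul' := by
          intro c x
          show τ ⟨(c • x).1, _⟩ = c • τ ⟨x.1, _⟩
          have h1 : (⟨(c • x).1, hVN _ (c • x).2⟩ : ↥N)
              = (algebraMap K (↥M) c) • (⟨x.1, hVN _ x.2⟩ : ↥N) := by
            apply Subtype.ext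
            show c • x.1 = (algebraMap K (↥M) c) • x.1
            rw [algebraMap_smul]
          calc τ ⟨(c • x).1, hVN _ (c • x).2⟩
              = τ ((algebraMap K (↥M) c) • ⟨x.1, hVN _ x.2⟩) := congrArg τ h1
            _ = (algebraMap K (↥M) c) • τ ⟨x.1, hVN _ x.2⟩ := map_smul τ _ _
            _ = c • τ ⟨x.1, hVN _ x.2⟩ := algebraMap_smul L c _ }
    have hbM : b ∈ M := IntermediateField.subset_adjoin K {b} rfl
    have hbaN : b - a ∈ N := by
      apply sub_mem
      · exact N.algebraMap_mem ⟨b, hbM⟩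
      · exact IntermediateField.mem_adjoin_simple_self (↥M) a
    have hz1 : ∀ n : ℕ, (b - a) ^ (n + 1) ∈ V := fun n => hNV _ (pow_mem hbaN (n + 1))
    have hτba : τ ⟨b - a, hbaN⟩ = b - a'' := by
      have hsplit : (⟨b - a, hbaN⟩ : ↥N)
          = algebraMap (↥M) ↥N ⟨b, hbM⟩ - IntermediateField.AdjoinSimple.gen (↥M) a :=
        Subtype.ext rfl
      rw [hsplit, map_sub, hτgen, τ.commutes]
      rfl
    have hw1 : ∀ n : ℕ, T ⟨(b - a) ^ (n + 1), hz1 n⟩ = (b - a'') ^ (n + 1) := by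
      intro n
      show τ ⟨(b - a) ^ (n + 1), _⟩ = _
      rw [show (⟨(b - a) ^ (n + 1), hVN _ (hz1 n)⟩ : ↥N)
          = (⟨b - a, hbaN⟩ : ↥N) ^ (n + 1) from Subtype.ext rfl, map_pow, hτba]
    have h1 : ‖b - a''‖ ≤ ‖b - a‖ := kras_one_sided hext V T _ _ hz1 hw1
    -- reverse direction
    have hinjτ : Function.Injective τ := τ.toRingHom.injective
    have hinjT : Function.Injective T := by
      intro x y hxy
      have := hinjτ hxy
      exact Subtype.ext (congrArg Subtype.val this)
    let e : ↥V ≃ₗ[K] ↥(LinearMap.range T) := LinearEquiv.ofInjective T hinjT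
    haveI : FiniteDimensional K ↥(LinearMap.range T) := Module.Finite.equiv e
    let T' : ↥(LinearMap.range T) →ₗ[K] L := V.subtype.comp e.symm.toLinearMap
    have hz2 : ∀ n : ℕ, (b - a'') ^ (n + 1) ∈ LinearMap.range T :=
      fun n => ⟨⟨(b - a) ^ (n + 1), hz1 n⟩, hw1 n⟩
    have hw2 : ∀ n : ℕ, T' ⟨(b - a'') ^ (n + 1), hz2 n⟩ = (b - a) ^ (n + 1) := by
      intro n
      have he : (⟨(b - a'') ^ (n + 1), hz2 n⟩ : ↥(LinearMap.range T))
          = e ⟨(b - a) ^ (n + 1), hz1 n⟩ := by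
        apply Subtype.ext
        rw [show ((e ⟨(b - a) ^ (n + 1), hz1 n⟩ : ↥(LinearMap.range T)) : L)
            = T ⟨(b - a) ^ (n + 1), hz1 n⟩ from rfl, hw1 n]
      rw [he]
      show V.subtype (e.symm (e ⟨(b - a) ^ (n + 1), hz1 n⟩)) = _
      rw [e.symm_apply_apply]
      rfl
    have h2 : ‖b - a‖ ≤ ‖b - a''‖ := kras_one_sided hext _ T' _ _ hz2 hw2
    have heq : ‖b - a''‖ = ‖b - a‖ := le_antisymm h1 h2
    have hmax : ‖a'' - a‖ ≤ max ‖a'' - b‖ ‖b - a‖ := by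
      have := IsUltrametricDist.norm_add_le_max (a'' - b) (b - a)
      rwa [sub_add_sub_cancel] at this
    rw [norm_sub_rev a'' b, heq, max_self] at hmax
    linarith
end

section
/- Let d ≥ 1 be a natural number and u ∈ ℚ₂. Then the polynomial (X − u)^d − 2^(10d+1) is irreducible over the field ℚ₂ of 2-adic numbers. -/
open Polynomial

lemma eisenstein_two (d : ℕ) (hd : 1 ≤ d) :
    Irreducible ((X : ℚ_[2][X]) ^ d - C 2) := by
  have hd0 : d ≠ 0 := by omega
  have hmonic : ((X : ℤ_[2][X]) ^ d - C 2).Monic := monic_X_pow_sub_C _ hd0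
  have h2 : Prime (2 : ℤ_[2]) := by
    have := PadicInt.prime_p (p := 2)
    simpa using this
  have hP : (Ideal.span {(2 : ℤ_[2])}).IsPrime :=
    (Ideal.span_singleton_prime h2.ne_zero).mpr h2
  have hirr : Irreducible ((X : ℤ_[2][X]) ^ d - C 2) := by
    refine Polynomial.IsEisensteinAt.irreducible
      (𝓟 := Ideal.span {(2 : ℤ_[2])}) ⟨?_, ?_, ?_⟩ hP hmonic.isPrimitive ?_
    · rw [hmonic.leadingCoeff]
      intro h
      exact hP.ne_top (Ideal.eq_top_of_isUnit_mem _ h isUnit_one)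
    · intro n hn
      rw [natDegree_X_pow_sub_C] at hn
      rw [coeff_sub, coeff_X_pow, if_neg (by omega), coeff_C]
      split
      · simpa using Ideal.mem_span_singleton_self (2 : ℤ_[2])
      · simp
    · rw [coeff_sub, coeff_X_pow, if_neg hd0.symm, coeff_C, if_pos rfl,
        Ideal.span_singleton_pow, Ideal.mem_span_singleton]
      rintro ⟨x, hx⟩
      have : (2 : ℤ_[2]) * (1 + 2 * x) = 0 := by linear_combination -hx
      rcases mul_eq_zero.mp this with h | h
      · exact h2.ne_zero h
      · exact h2.not_isUnit (IsUnit.of_mul_eq_one (-x) (by linear_combination -h))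
    · rw [natDegree_X_pow_sub_C]; omega
  have := (hmonic.irreducible_iff_irreducible_map_fraction_map (K := ℚ_[2])).mp hirr
  simpa [Polynomial.map_sub, Polynomial.map_pow, map_ofNat] using this

theorem stmt_18 (d : ℕ) (hd : 1 ≤ d) (u : ℚ_[2]) :
    Irreducible ((Polynomial.X - Polynomial.C u) ^ d
      - Polynomial.C ((2 : ℚ_[2]) ^ (10 * d + 1))) := by
  have hd0 : d ≠ 0 := by omega
  set c : ℚ_[2] := (2 : ℚ_[2]) ^ (10 * d + 1) with hc_def
  have hc : Irreducible ((X : ℚ_[2][X]) ^ d - C c) := by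
    set L := AlgebraicClosure ℚ_[2]
    obtain ⟨α, hα0⟩ := IsAlgClosed.exists_root
      (((X : ℚ_[2][X]) ^ d - C c).map (algebraMap ℚ_[2] L))
      (by rw [Polynomial.degree_map, degree_X_pow_sub_C (by omega : 0 < d)]
          exact_mod_cast hd0)
    have hα : aeval α ((X : ℚ_[2][X]) ^ d - C c) = 0 := by
      rwa [aeval_def, ← eval_map]
    have hαd : α ^ d = (2 : L) ^ (10 * d + 1) := by
      have h := hα
      simp only [map_sub, map_pow, aeval_X, aeval_C, sub_eq_zero] at h
      rw [h, hc_def, map_pow, map_ofNat]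
    have h2L : (2 : L) ≠ 0 := two_ne_zero
    set β : L := α / (2 : L) ^ 10 with hβ_def
    have hβd : β ^ d = (2 : L) := by
      rw [hβ_def, div_pow, hαd, ← pow_mul, pow_succ]
      exact mul_div_cancel_left₀ _ (pow_ne_zero _ h2L)
    have hβroot : aeval β ((X : ℚ_[2][X]) ^ d - C (2 : ℚ_[2])) = 0 := by
      simp [map_pow, hβd, map_ofNat]
    have hβint : IsIntegral ℚ_[2] β :=
      ⟨(X : ℚ_[2][X]) ^ d - C 2, monic_X_pow_sub_C _ hd0, by rwa [← aeval_def]⟩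
    have hαint : IsIntegral ℚ_[2] α :=
      ⟨(X : ℚ_[2][X]) ^ d - C c, monic_X_pow_sub_C _ hd0, by rwa [← aeval_def]⟩
    have hminβ : (X : ℚ_[2][X]) ^ d - C 2 = minpoly ℚ_[2] β :=
      minpoly.eq_of_irreducible_of_monic (eisenstein_two d hd) hβroot (monic_X_pow_sub_C _ hd0)
    have hdegβ : (minpoly ℚ_[2] β).natDegree = d := by
      rw [← hminβ, natDegree_X_pow_sub_C]
    -- upper bound on degree of minpoly α
    have hle : (minpoly ℚ_[2] α).natDegree ≤ d := by
      have := natDegree_le_of_dvd (minpoly.dvd ℚ_[2] α hα) (X_pow_sub_C_ne_zero (by omega) c)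
      rwa [natDegree_X_pow_sub_C] at this
    -- lower bound
    set q : ℚ_[2][X] := (minpoly ℚ_[2] α).comp (C ((2 : ℚ_[2]) ^ 10) * X) with hq_def
    have hqβ : aeval β q = 0 := by
      rw [hq_def, aeval_comp]
      have : aeval β (C ((2 : ℚ_[2]) ^ 10) * X) = α := by
        simp [hβ_def, map_pow, map_ofNat]
        rw [mul_div_assoc']; exact mul_div_cancel_left₀ _ (pow_ne_zero _ h2L)
      rw [this, minpoly.aeval]
    have hq0 : q ≠ 0 := by
      intro h
      rcases comp_eq_zero_iff.mp h with h' | ⟨_, h'⟩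
      · exact minpoly.ne_zero hαint h'
      · have : (C ((2 : ℚ_[2]) ^ 10) * X).natDegree = 1 :=
          natDegree_C_mul_X _ (pow_ne_zero _ two_ne_zero)
        rw [h'] at this
        simp at this
    have hge : d ≤ (minpoly ℚ_[2] α).natDegree := by
      have h1 := natDegree_le_of_dvd (minpoly.dvd ℚ_[2] β hqβ) hq0
      rw [hdegβ] at h1
      rwa [hq_def, natDegree_comp, natDegree_C_mul_X _ (pow_ne_zero _ two_ne_zero), mul_one] at h1
    have heq : (X : ℚ_[2][X]) ^ d - C c = minpoly ℚ_[2] α :=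
      eq_of_monic_of_dvd_of_natDegree_le (minpoly.monic hαint) (monic_X_pow_sub_C _ hd0)
        (minpoly.dvd ℚ_[2] α hα)
        (by rw [natDegree_X_pow_sub_C]; exact le_antisymm hle hge ▸ hge)
    rw [heq]
    exact minpoly.irreducible hαint
  have key := (MulEquiv.irreducible_iff
    (algEquivAevalXAddC (-u) : ℚ_[2][X] ≃ₐ[ℚ_[2]] ℚ_[2][X]).toMulEquiv
    (x := (X : ℚ_[2][X]) ^ d - C c)).mpr hc
  have : (algEquivAevalXAddC (-u) : ℚ_[2][X] ≃ₐ[ℚ_[2]] ℚ_[2][X]).toMulEquiv ((X : ℚ_[2][X]) ^ d - C c)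
      = (X - C u) ^ d - C c := by
    simp [algEquivAevalXAddC, algEquivOfCompEqX, sub_eq_add_neg]
  rwa [this] at key
end
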